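/- arXiv:2406.10014 — 2 statements merged into one kernel-verified Lean document; each statement's English description precedes it below -/
import Mathlib

section
/- Assume the abc-conjecture: for every $\epsilon > 0$ there exists a constant $C_\epsilon > 0$ such that for all positive integers $a, b, c$ with $a + b = c$ and $\gcd(a, b) = 1$, one has $c \le C_\epsilon \, \kappa(abc)^{1+\epsilon}$. Let $k > 5/4$ be a real number. Then there exists a constant $X_k > 0$ such that for all real numbers $x, y$ with $x > X_k$ and $1 \le y \le x^{(4k-5)/(8k)}$, there do not exist integers $n$ and $d \ge 1$ such that all seven integers $n - 2d, n - d, n, n + d, n + 2d, n + 3d, n + 4d$ lie in the interval $(x, x + y]$ and are all $k$-powered. -/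
/-- The squarefree kernel `κ(n)`: the product of the distinct primes dividing `n`. -/
def kappa (n : ℕ) : ℕ := ∏ p ∈ n.primeFactors, p

/-- A positive integer `n` is `k`-powered if `κ(n)^k ≤ n`. -/
noncomputable def IsKPowered (k : ℝ) (n : ℕ) : Prop := (kappa n : ℝ) ^ k ≤ (n : ℝ)

lemma kappa_pos (n : ℕ) : 0 < kappa n :=
  Finset.prod_pos fun _ hp => (Nat.prime_of_mem_primeFactors hp).pos

lemma kappa_dvd (n : ℕ) : kappa n ∣ n := Nat.prod_primeFactors_dvd n

lemma kappa_le_self {n : ℕ} (h : 0 < n) : kappa n ≤ n := Nat.le_of_dvd h (kappa_dvd n)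

lemma kappa_le_kappa {m n : ℕ} (hd : m ∣ n) (hn : n ≠ 0) : kappa m ≤ kappa n :=
  Finset.prod_le_prod_of_subset_of_one_le' (Nat.primeFactors_mono hd hn)
    (fun _ hp _ => (Nat.prime_of_mem_primeFactors hp).one_lt.le)

lemma kappa_mul_le (m n : ℕ) : kappa (m * n) ≤ kappa m * kappa n := by
  rcases eq_or_ne m 0 with rfl | hm
  · rw [Nat.zero_mul]
    nth_rewrite 1 [← Nat.mul_one (kappa 0)]
    exact Nat.mul_le_mul_left _ (kappa_pos n)
  rcases eq_or_ne n 0 with rfl | hn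
  · rw [Nat.mul_zero]
    nth_rewrite 1 [← Nat.one_mul (kappa 0)]
    exact Nat.mul_le_mul_right _ (kappa_pos m)
  unfold kappa
  rw [Nat.primeFactors_mul hm hn]
  calc ∏ p ∈ m.primeFactors ∪ n.primeFactors, p
      = (∏ p ∈ m.primeFactors, p) * ∏ p ∈ n.primeFactors \ m.primeFactors, p := by
        rw [← Finset.prod_union Finset.disjoint_sdiff, Finset.union_sdiff_self_eq_union]
    _ ≤ (∏ p ∈ m.primeFactors, p) * ∏ p ∈ n.primeFactors, p := by
        gcongr
        · exact fun p hp _ => (Nat.prime_of_mem_primeFactors hp).one_lt.le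
        · exact Finset.sdiff_subset

lemma kappa_pow (n e : ℕ) (he : e ≠ 0) : kappa (n ^ e) = kappa n := by
  unfold kappa; rw [Nat.primeFactors_pow n he]

set_option maxHeartbeats 2000000 in
theorem stmt10
    (habc : ∀ ε : ℝ, 0 < ε → ∃ Cε : ℝ, 0 < Cε ∧ ∀ a b c : ℕ, 0 < a → 0 < b → 0 < c →
      a + b = c → Nat.gcd a b = 1 →
      (c : ℝ) ≤ Cε * (kappa (a * b * c) : ℝ) ^ (1 + ε))
    (k : ℝ) (hk : 5 / 4 < k) :
    ∃ X : ℝ, 0 < X ∧ ∀ x y : ℝ, X < x → 1 ≤ y → y ≤ x ^ ((4 * k - 5) / (8 * k)) →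
      ¬ ∃ n d : ℤ, 1 ≤ d ∧
        ∀ m ∈ ([n - 2 * d, n - d, n, n + d, n + 2 * d, n + 3 * d, n + 4 * d] : List ℤ),
          x < (m : ℝ) ∧ (m : ℝ) ≤ x + y ∧ IsKPowered k m.toNat := by
  have hk0 : (0 : ℝ) < k := by linarith
  set θ : ℝ := (4 * k - 5) / (8 * k) with hθdef
  set δ : ℝ := (12 * k - 15) / (8 * k) with hδdef
  have hδ0 : 0 < δ := div_pos (by linarith) (by linarith)
  have hθ0 : 0 ≤ θ := div_nonneg (by linarith) (by linarith)
  have hθhalf : θ ≤ 1 / 2 := by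
    rw [hθdef, div_le_div_iff₀ (by linarith) (by norm_num)]; linarith
  have h5k : 5 / k ≤ 4 := by rw [div_le_iff₀ hk0]; linarith
  have h5k0 : 0 ≤ 5 / k := by positivity
  have hδ9 : δ ≤ 9 := by rw [hδdef, div_le_iff₀ (by linarith)]; linarith
  set ε : ℝ := δ / 9 with hεdef
  have hε0 : 0 < ε := by positivity
  have hε1 : ε ≤ 1 := by rw [hεdef]; linarith
  obtain ⟨C, hC, hABC⟩ := habc ε hε0
  set K₀ : ℝ := 3145728 * C with hK₀def
  have hK₀0 : 0 < K₀ := by positivity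
  refine ⟨max 1 ((K₀ + 1) ^ (2 / δ)), lt_of_lt_of_le one_pos (le_max_left _ _), ?_⟩
  intro x y hx hy1 hyθ
  rintro ⟨n, d, hd, hall⟩
  have hx1 : (1 : ℝ) < x := lt_of_le_of_lt (le_max_left _ _) hx
  have hx0 : (0 : ℝ) < x := by linarith
  -- extract the membership facts
  obtain ⟨hl0, hr0, hp0⟩ := hall (n - 2 * d) (by simp)
  obtain ⟨hl2, hr2, hp2⟩ := hall n (by simp)
  obtain ⟨hl3, hr3, hp3⟩ := hall (n + d) (by simp)
  obtain ⟨hl4, hr4, hp4⟩ := hall (n + 2 * d) (by simp)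
  obtain ⟨hl6, hr6, hp6⟩ := hall (n + 4 * d) (by simp)
  have hdR : (1 : ℝ) ≤ (d : ℝ) := by exact_mod_cast hd
  -- y ≤ x
  have hyx : y ≤ x := by
    calc y ≤ x ^ θ := hyθ
    _ ≤ x ^ (1 : ℝ) := Real.rpow_le_rpow_of_exponent_le hx1.le (by linarith)
    _ = x := Real.rpow_one x
  -- d bound
  have hl0' : x < (n : ℝ) - 2 * (d : ℝ) := by push_cast at hl0; linarith
  have hr6' : (n : ℝ) + 4 * (d : ℝ) ≤ x + y := by push_cast at hr6; linarith
  have hd6 : 6 * (d : ℝ) < y := by linarith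
  have hdy : (d : ℝ) ≤ y := by linarith
  -- naturals
  have hn_pos : (0 : ℤ) < n := by
    have : (0 : ℝ) < (n : ℝ) := by linarith
    exact_mod_cast this
  have hd_pos : (0 : ℤ) < d := by linarith
  set N : ℕ := n.toNat with hNdef
  set D : ℕ := d.toNat with hDdef
  have hNn : (N : ℤ) = n := Int.toNat_of_nonneg hn_pos.le
  have hDd : (D : ℤ) = d := Int.toNat_of_nonneg hd_pos.le
  have hD_pos : 0 < D := by
    have : (0 : ℤ) < (D : ℤ) := by rw [hDd]; exact hd_pos
    exact_mod_cast this
  have hNR : ((N : ℕ) : ℝ) = (n : ℝ) := by exact_mod_cast hNn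
  have hDR : ((D : ℕ) : ℝ) = (d : ℝ) := by exact_mod_cast hDd
  have h2DN : 2 * D < N := by
    have hR : 2 * ((D : ℕ) : ℝ) + 1 ≤ ((N : ℕ) : ℝ) := by rw [hNR, hDR]; linarith
    have : 2 * D + 1 ≤ N := by exact_mod_cast hR
    omega
  -- gcd reduction
  set g : ℕ := Nat.gcd N D with hgdef
  have hg_pos : 0 < g := Nat.gcd_pos_of_pos_left D (by omega)
  set N₁ : ℕ := N / g with hN₁def
  set D₁ : ℕ := D / g with hD₁def
  have hgN : g * N₁ = N := Nat.mul_div_cancel' (Nat.gcd_dvd_left N D)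
  have hgD : g * D₁ = D := Nat.mul_div_cancel' (Nat.gcd_dvd_right N D)
  have hcop : Nat.Coprime N₁ D₁ := Nat.coprime_div_gcd_div_gcd hg_pos
  have hD₁_pos : 0 < D₁ := by
    rcases Nat.eq_zero_or_pos D₁ with h | h
    · rw [h, Nat.mul_zero] at hgD; omega
    · exact h
  have h2D₁N₁ : 2 * D₁ < N₁ := by
    have h1 : g * (2 * D₁) < g * N₁ := by
      rw [hgN]
      calc g * (2 * D₁) = 2 * (g * D₁) := by ring
      _ = 2 * D := by rw [hgD]
      _ < N := h2DN
    exact Nat.lt_of_mul_lt_mul_left h1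
  set w : ℕ := N₁ - 2 * D₁ with hwdef
  have hw : w + 2 * D₁ = N₁ := by omega
  have hw_pos : 0 < w := by omega
  -- the five terms in primitive coordinates
  set v0 : ℕ := w with hv0def
  set v2 : ℕ := w + 2 * D₁ with hv2def
  set v3 : ℕ := w + 3 * D₁ with hv3def
  set v4 : ℕ := w + 4 * D₁ with hv4def
  set v6 : ℕ := w + 6 * D₁ with hv6def
  have hv2pos : 0 < v2 := by omega
  have hv3pos : 0 < v3 := by omega
  have hv4pos : 0 < v4 := by omega
  have hv6pos : 0 < v6 := by omega
  -- link with integers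
  have hNat0 : g * v0 + 2 * D = N := by rw [hv0def, ← hgD, ← hgN, ← hw]; ring
  have hint0 : ((g * v0 : ℕ) : ℤ) = n - 2 * d := by
    have h1 : ((g * v0 : ℕ) : ℤ) + 2 * (D : ℤ) = (N : ℤ) := by exact_mod_cast hNat0
    rw [hNn, hDd] at h1; linarith
  have hint2 : ((g * v2 : ℕ) : ℤ) = n := by
    have h1 : g * v2 = g * v0 + 2 * D := by rw [← hgD, hv2def, hv0def]; ring
    have h2 : ((g * v2 : ℕ) : ℤ) = ((g * v0 : ℕ) : ℤ) + 2 * ((D : ℕ) : ℤ) := by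
      exact_mod_cast h1
    rw [h2, hint0, hDd]; ring
  have hint3 : ((g * v3 : ℕ) : ℤ) = n + d := by
    have h1 : g * v3 = g * v0 + 3 * D := by rw [← hgD, hv3def, hv0def]; ring
    have h2 : ((g * v3 : ℕ) : ℤ) = ((g * v0 : ℕ) : ℤ) + 3 * ((D : ℕ) : ℤ) := by
      exact_mod_cast h1
    rw [h2, hint0, hDd]; ring
  have hint4 : ((g * v4 : ℕ) : ℤ) = n + 2 * d := by
    have h1 : g * v4 = g * v0 + 4 * D := by rw [← hgD, hv4def, hv0def]; ring
    have h2 : ((g * v4 : ℕ) : ℤ) = ((g * v0 : ℕ) : ℤ) + 4 * ((D : ℕ) : ℤ) := by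
      exact_mod_cast h1
    rw [h2, hint0, hDd]; ring
  have hint6 : ((g * v6 : ℕ) : ℤ) = n + 4 * d := by
    have h1 : g * v6 = g * v0 + 6 * D := by rw [← hgD, hv6def, hv0def]; ring
    have h2 : ((g * v6 : ℕ) : ℤ) = ((g * v0 : ℕ) : ℤ) + 6 * ((D : ℕ) : ℤ) := by
      exact_mod_cast h1
    rw [h2, hint0, hDd]; ring
  -- kappa bound for each term
  have kbound : ∀ (u : ℕ) (t : ℤ), 0 < u → ((g * u : ℕ) : ℤ) = t → IsKPowered k t.toNat →
      ((t : ℤ) : ℝ) ≤ x + y → (kappa u : ℝ) ≤ (2 * x) ^ (1 / k) := by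
    intro u t hu hgu hpow hle
    have htoNat : t.toNat = g * u := by rw [← hgu, Int.toNat_natCast]
    rw [htoNat] at hpow
    have htR : ((g * u : ℕ) : ℝ) = ((t : ℤ) : ℝ) := by exact_mod_cast hgu
    have hκk : ((kappa (g * u) : ℕ) : ℝ) ^ k ≤ 2 * x := by
      refine le_trans hpow ?_
      rw [htR]; linarith
    have hκpos : (0 : ℝ) < ((kappa (g * u) : ℕ) : ℝ) := by exact_mod_cast kappa_pos (g * u)
    have hgu_bound : ((kappa (g * u) : ℕ) : ℝ) ≤ (2 * x) ^ (1 / k) := by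
      have h1 : ((kappa (g * u) : ℕ) : ℝ) = (((kappa (g * u) : ℕ) : ℝ) ^ k) ^ (1 / k) := by
        rw [← Real.rpow_mul hκpos.le, mul_one_div, div_self hk0.ne', Real.rpow_one]
      rw [h1]
      exact Real.rpow_le_rpow (Real.rpow_nonneg hκpos.le k) hκk (by positivity)
    have hdvd : kappa u ≤ kappa (g * u) :=
      kappa_le_kappa ⟨g, Nat.mul_comm g u⟩ (Nat.mul_ne_zero hg_pos.ne' hu.ne')
    calc (kappa u : ℝ) ≤ (kappa (g * u) : ℝ) := by exact_mod_cast hdvd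
    _ ≤ (2 * x) ^ (1 / k) := hgu_bound
  have hκ0 : (kappa v0 : ℝ) ≤ (2 * x) ^ (1 / k) :=
    kbound v0 (n - 2 * d) hw_pos hint0 hp0 (by push_cast; push_cast at hr0; linarith)
  have hκ2 : (kappa v2 : ℝ) ≤ (2 * x) ^ (1 / k) :=
    kbound v2 n hv2pos hint2 hp2 (by push_cast at hr2 ⊢; linarith)
  have hκ3 : (kappa v3 : ℝ) ≤ (2 * x) ^ (1 / k) :=
    kbound v3 (n + d) hv3pos hint3 hp3 (by push_cast at hr3 ⊢; linarith)
  have hκ4 : (kappa v4 : ℝ) ≤ (2 * x) ^ (1 / k) :=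
    kbound v4 (n + 2 * d) hv4pos hint4 hp4 (by push_cast at hr4 ⊢; linarith)
  have hκ6 : (kappa v6 : ℝ) ≤ (2 * x) ^ (1 / k) :=
    kbound v6 (n + 4 * d) hv6pos hint6 hp6 (by push_cast at hr6 ⊢; linarith)
  -- the abc triple
  set a : ℕ := v0 * v4 ^ 3 with hadef
  set b : ℕ := 16 * (D₁ ^ 3 * v3) with hbdef
  set c : ℕ := v2 ^ 3 * v6 with hcdef
  have habceq : a + b = c := by
    rw [hadef, hbdef, hcdef, hv0def, hv2def, hv3def, hv4def, hv6def]; ring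
  have ha_pos : 0 < a := Nat.mul_pos hw_pos (pow_pos hv4pos 3)
  have hb_pos : 0 < b := by positivity
  have hc_pos : 0 < c := Nat.mul_pos (pow_pos hv2pos 3) hv6pos
  -- coprimalities
  have hwD : Nat.Coprime w D₁ := by
    have h1 := hcop
    rw [← hw] at h1
    exact (Nat.coprime_add_mul_right_left w D₁ 2).mp h1
  have hv0D : Nat.Coprime v0 D₁ := by rw [hv0def]; exact hwD
  have hv3D : Nat.Coprime v3 D₁ := by
    rw [hv3def]; exact (Nat.coprime_add_mul_right_left w D₁ 3).mpr hwD
  have hv4D : Nat.Coprime v4 D₁ := by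
    rw [hv4def]; exact (Nat.coprime_add_mul_right_left w D₁ 4).mpr hwD
  have hcop43 : Nat.Coprime v4 v3 := by
    have h1 : Nat.gcd v4 v3 ∣ v4 - v3 :=
      Nat.dvd_sub (Nat.gcd_dvd_left _ _) (Nat.gcd_dvd_right _ _)
    have h2 : v4 - v3 = D₁ := by omega
    rw [h2] at h1
    have h3 : Nat.gcd v4 v3 ∣ Nat.gcd v3 D₁ := Nat.dvd_gcd (Nat.gcd_dvd_right _ _) h1
    have h4 : Nat.gcd v3 D₁ = 1 := hv3D
    rw [h4] at h3
    exact Nat.dvd_one.mp h3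
  have h03 : Nat.gcd v0 v3 ∣ 3 := by
    have h1 : Nat.gcd v0 v3 ∣ v3 - v0 :=
      Nat.dvd_sub (Nat.gcd_dvd_right _ _) (Nat.gcd_dvd_left _ _)
    have h2 : v3 - v0 = 3 * D₁ := by omega
    rw [h2] at h1
    have hGD : Nat.Coprime (Nat.gcd v0 v3) D₁ :=
      Nat.Coprime.coprime_dvd_left (Nat.gcd_dvd_left v0 v3) hv0D
    exact hGD.dvd_of_dvd_mul_right h1
  have hgav3 : Nat.gcd a v3 ∣ 3 := by
    have h1 : Nat.gcd a v3 = Nat.gcd v0 v3 := by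
      rw [hadef]; exact Nat.Coprime.gcd_mul_right_cancel v0 (hcop43.pow_left 3)
    rw [h1]; exact h03
  set h : ℕ := Nat.gcd a b with hhdef
  have hh_pos : 0 < h := Nat.gcd_pos_of_pos_left b ha_pos
  have hha : h ∣ a := Nat.gcd_dvd_left a b
  have hhb : h ∣ b := Nat.gcd_dvd_right a b
  have hhc : h ∣ c := habceq ▸ dvd_add hha hhb
  have hcopaD : Nat.Coprime a D₁ := by rw [hadef]; exact hv0D.mul (hv4D.pow_left 3)
  have hcophD : Nat.Coprime h D₁ := Nat.Coprime.coprime_dvd_left hha hcopaD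
  have hh16v3 : h ∣ 16 * v3 := by
    have h1 : b = (16 * v3) * D₁ ^ 3 := by rw [hbdef]; ring
    exact (hcophD.pow_right 3).dvd_of_dvd_mul_right (h1 ▸ hhb)
  have hh48 : h ∣ 48 := by
    have h1 : h ∣ Nat.gcd a (16 * v3) := Nat.dvd_gcd hha hh16v3
    have h2 : Nat.gcd a (16 * v3) ∣ Nat.gcd (16 * a) (16 * v3) :=
      Nat.gcd_dvd_gcd_mul_left_left a (16 * v3) 16
    have h3 : Nat.gcd (16 * a) (16 * v3) = 16 * Nat.gcd a v3 := Nat.gcd_mul_left 16 a v3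
    have h4 : 16 * Nat.gcd a v3 ∣ 48 := by
      have h5 := Nat.mul_dvd_mul_left 16 hgav3
      norm_num at h5
      exact h5
    have h6 : Nat.gcd (16 * a) (16 * v3) ∣ 48 := by rw [h3]; exact h4
    exact h1.trans (h2.trans h6)
  -- apply abc
  have hsum : a / h + b / h = c / h := by
    rw [← habceq, Nat.add_div_of_dvd_right hha]
  have hcop_ab : Nat.gcd (a / h) (b / h) = 1 := by
    rw [hhdef]; exact Nat.coprime_div_gcd_div_gcd hh_pos
  have hmain := hABC (a / h) (b / h) (c / h)
    (Nat.div_pos (Nat.le_of_dvd ha_pos hha) hh_pos)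
    (Nat.div_pos (Nat.le_of_dvd hb_pos hhb) hh_pos)
    (Nat.div_pos (Nat.le_of_dvd hc_pos hhc) hh_pos)
    hsum hcop_ab
  -- kappa chain over ℕ
  have hk1 : kappa (a / h * (b / h) * (c / h)) ≤ kappa (a * b * c) := by
    apply kappa_le_kappa
    · exact mul_dvd_mul (mul_dvd_mul (Nat.div_dvd_of_dvd hha) (Nat.div_dvd_of_dvd hhb))
        (Nat.div_dvd_of_dvd hhc)
    · positivity
  have hka : kappa a ≤ kappa v0 * kappa v4 := by
    rw [hadef]
    calc kappa (v0 * v4 ^ 3) ≤ kappa v0 * kappa (v4 ^ 3) := kappa_mul_le _ _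
    _ = kappa v0 * kappa v4 := by rw [kappa_pow v4 3 (by norm_num)]
  have hkb : kappa b ≤ 16 * (D₁ * kappa v3) := by
    rw [hbdef]
    calc kappa (16 * (D₁ ^ 3 * v3)) ≤ kappa 16 * kappa (D₁ ^ 3 * v3) := kappa_mul_le _ _
    _ ≤ kappa 16 * (kappa (D₁ ^ 3) * kappa v3) :=
        Nat.mul_le_mul_left _ (kappa_mul_le _ _)
    _ ≤ 16 * (D₁ * kappa v3) := by
        refine Nat.mul_le_mul (kappa_le_self (by norm_num)) (Nat.mul_le_mul_right _ ?_)
        rw [kappa_pow D₁ 3 (by norm_num)]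
        exact kappa_le_self hD₁_pos
  have hkc : kappa c ≤ kappa v2 * kappa v6 := by
    rw [hcdef]
    calc kappa (v2 ^ 3 * v6) ≤ kappa (v2 ^ 3) * kappa v6 := kappa_mul_le _ _
    _ = kappa v2 * kappa v6 := by rw [kappa_pow v2 3 (by norm_num)]
  have hkall : kappa (a / h * (b / h) * (c / h)) ≤
      kappa v0 * kappa v4 * (16 * (D₁ * kappa v3)) * (kappa v2 * kappa v6) := by
    refine hk1.trans ?_
    calc kappa (a * b * c) ≤ kappa (a * b) * kappa c := kappa_mul_le _ _
    _ ≤ kappa a * kappa b * kappa c := Nat.mul_le_mul_right _ (kappa_mul_le a b)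
    _ ≤ kappa v0 * kappa v4 * (16 * (D₁ * kappa v3)) * (kappa v2 * kappa v6) :=
        Nat.mul_le_mul (Nat.mul_le_mul hka hkb) hkc
  -- real bounds
  have hD₁x : (D₁ : ℝ) ≤ x ^ θ := by
    have h1 : D₁ ≤ D := hD₁def ▸ Nat.div_le_self D g
    calc (D₁ : ℝ) ≤ (D : ℝ) := by exact_mod_cast h1
    _ = (d : ℝ) := hDR
    _ ≤ y := hdy
    _ ≤ x ^ θ := hyθ
  have hκA : (kappa (a / h * (b / h) * (c / h)) : ℝ) ≤
      16 * x ^ θ * ((2 * x) ^ (1 / k)) ^ (5 : ℕ) := by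
    have hcast : (kappa (a / h * (b / h) * (c / h)) : ℝ) ≤
        (kappa v0 : ℝ) * (kappa v4 : ℝ) * (16 * ((D₁ : ℝ) * (kappa v3 : ℝ))) *
          ((kappa v2 : ℝ) * (kappa v6 : ℝ)) := by
      have h' : ((kappa (a / h * (b / h) * (c / h)) : ℕ) : ℝ) ≤
          ((kappa v0 * kappa v4 * (16 * (D₁ * kappa v3)) * (kappa v2 * kappa v6) : ℕ) : ℝ) :=
        Nat.cast_le.mpr hkall
      push_cast at h'
      exact h'
    refine hcast.trans ?_
    have hQ0 : (0 : ℝ) ≤ (2 * x) ^ (1 / k) := Real.rpow_nonneg (by linarith) _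
    calc (kappa v0 : ℝ) * (kappa v4 : ℝ) * (16 * ((D₁ : ℝ) * (kappa v3 : ℝ))) *
          ((kappa v2 : ℝ) * (kappa v6 : ℝ))
        ≤ (2 * x) ^ (1 / k) * ((2 * x) ^ (1 / k)) *
            (16 * (x ^ θ * ((2 * x) ^ (1 / k)))) *
            ((2 * x) ^ (1 / k) * ((2 * x) ^ (1 / k))) := by
          gcongr
    _ = 16 * x ^ θ * ((2 * x) ^ (1 / k)) ^ (5 : ℕ) := by ring
  -- lower bound for c
  have hg0R : (0 : ℝ) < (g : ℕ) := by exact_mod_cast hg_pos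
  have hgR : ((g : ℕ) : ℝ) ≤ x ^ θ := by
    have h1 : g ≤ D := Nat.le_of_dvd hD_pos (Nat.gcd_dvd_right N D)
    calc ((g : ℕ) : ℝ) ≤ (D : ℝ) := by exact_mod_cast h1
    _ = (d : ℝ) := hDR
    _ ≤ y := hdy
    _ ≤ x ^ θ := hyθ
  have hxN : x ≤ (N : ℝ) := by rw [hNR]; linarith
  have hv2R : x ^ (1 - θ) ≤ (v2 : ℝ) := by
    have hN₁R : ((N₁ : ℕ) : ℝ) = (N : ℝ) / (g : ℝ) := by
      rw [eq_div_iff hg0R.ne']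
      exact_mod_cast (Nat.mul_comm g N₁ ▸ hgN)
    have hv2N₁ : v2 = N₁ := by omega
    calc x ^ (1 - θ) = x / x ^ θ := by rw [Real.rpow_sub hx0, Real.rpow_one]
    _ ≤ (N : ℝ) / (g : ℝ) := div_le_div₀ (by positivity) hxN hg0R hgR
    _ = ((N₁ : ℕ) : ℝ) := hN₁R.symm
    _ = (v2 : ℝ) := by rw [hv2N₁]
  have hccast : ((c : ℕ) : ℝ) ≤ 48 * ((c / h : ℕ) : ℝ) := by
    have h2 : c ≤ 48 * (c / h) := by
      calc c = h * (c / h) := (Nat.mul_div_cancel' hhc).symm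
      _ ≤ 48 * (c / h) := Nat.mul_le_mul_right _ (Nat.le_of_dvd (by norm_num) hh48)
    exact_mod_cast h2
  -- assemble
  set Q : ℝ := (2 * x) ^ (1 / k) with hQdef
  have hQ0 : (0 : ℝ) ≤ Q := Real.rpow_nonneg (by linarith) _
  have hchain : x ^ (4 - 4 * θ) ≤ 48 * C * (16 * x ^ θ * Q ^ (5 : ℕ)) ^ (1 + ε) := by
    calc x ^ (4 - 4 * θ) = (x ^ (1 - θ)) ^ (4 : ℕ) := by
          rw [← Real.rpow_natCast (x ^ (1 - θ)) 4, ← Real.rpow_mul hx0.le]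
          norm_num
          ring_nf
    _ ≤ (v2 : ℝ) ^ (4 : ℕ) := pow_le_pow_left₀ (by positivity) hv2R 4
    _ ≤ ((c : ℕ) : ℝ) := by
        have hc' : ((c : ℕ) : ℝ) = (v2 : ℝ) ^ 3 * (v6 : ℝ) := by rw [hcdef]; push_cast; ring
        rw [hc']
        have hv26 : (v2 : ℝ) ≤ (v6 : ℝ) := by exact_mod_cast (by omega : v2 ≤ v6)
        calc (v2 : ℝ) ^ 4 = (v2 : ℝ) ^ 3 * (v2 : ℝ) := by ring
        _ ≤ (v2 : ℝ) ^ 3 * (v6 : ℝ) := by gcongr <;> positivity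
    _ ≤ 48 * ((c / h : ℕ) : ℝ) := hccast
    _ ≤ 48 * (C * (kappa (a / h * (b / h) * (c / h)) : ℝ) ^ (1 + ε)) :=
        mul_le_mul_of_nonneg_left hmain (by norm_num)
    _ ≤ 48 * (C * (16 * x ^ θ * Q ^ (5 : ℕ)) ^ (1 + ε)) :=
        mul_le_mul_of_nonneg_left (mul_le_mul_of_nonneg_left
          (Real.rpow_le_rpow (by positivity) hκA (by positivity)) hC.le) (by norm_num)
    _ = 48 * C * (16 * x ^ θ * Q ^ (5 : ℕ)) ^ (1 + ε) := by ring
  -- simplify the base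
  have hQ5 : Q ^ (5 : ℕ) = (2 * x) ^ (5 / k) := by
    rw [hQdef, ← Real.rpow_natCast ((2 * x) ^ (1 / k)) 5, ← Real.rpow_mul (by linarith)]
    norm_num
    congr 1
    ring
  have h2rk : (2 : ℝ) ^ (5 / k) ≤ 16 := by
    calc (2 : ℝ) ^ (5 / k) ≤ (2 : ℝ) ^ (4 : ℝ) :=
        Real.rpow_le_rpow_of_exponent_le one_le_two h5k
    _ = 16 := by
        rw [show (4 : ℝ) = ((4 : ℕ) : ℝ) by norm_num, Real.rpow_natCast]; norm_num
  have hbase : 16 * x ^ θ * Q ^ (5 : ℕ) ≤ 256 * x ^ (θ + 5 / k) := by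
    calc 16 * x ^ θ * Q ^ (5 : ℕ) = 16 * x ^ θ * ((2 : ℝ) ^ (5 / k) * x ^ (5 / k)) := by
          rw [hQ5, Real.mul_rpow (by norm_num) hx0.le]
    _ ≤ 16 * x ^ θ * (16 * x ^ (5 / k)) := by gcongr <;> positivity
    _ = 256 * (x ^ θ * x ^ (5 / k)) := by ring
    _ = 256 * x ^ (θ + 5 / k) := by rw [← Real.rpow_add hx0]
  set σ : ℝ := θ + 5 / k with hσdef
  have hσ0 : 0 ≤ σ := by positivity
  have hσ92 : σ ≤ 9 / 2 := by rw [hσdef]; linarith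
  have hstep2 : (16 * x ^ θ * Q ^ (5 : ℕ)) ^ (1 + ε) ≤ 65536 * x ^ (σ + δ / 2) := by
    calc (16 * x ^ θ * Q ^ (5 : ℕ)) ^ (1 + ε) ≤ (256 * x ^ σ) ^ (1 + ε) :=
        Real.rpow_le_rpow (by positivity) hbase (by positivity)
    _ = (256 : ℝ) ^ (1 + ε) * x ^ (σ * (1 + ε)) := by
        rw [Real.mul_rpow (by norm_num) (by positivity), ← Real.rpow_mul hx0.le]
    _ ≤ 65536 * x ^ (σ + δ / 2) := by
        refine mul_le_mul ?_ ?_ (by positivity) (by norm_num)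
        · calc (256 : ℝ) ^ (1 + ε) ≤ (256 : ℝ) ^ (2 : ℝ) :=
              Real.rpow_le_rpow_of_exponent_le (by norm_num) (by linarith)
          _ = 65536 := by
              rw [show (2 : ℝ) = ((2 : ℕ) : ℝ) by norm_num, Real.rpow_natCast]; norm_num
        · refine Real.rpow_le_rpow_of_exponent_le hx1.le ?_
          have hσδ : σ * δ ≤ 9 / 2 * δ := mul_le_mul_of_nonneg_right hσ92 hδ0.le
          have hσε : σ * ε ≤ δ / 2 := by rw [hεdef]; linarith
          have hexpand : σ * (1 + ε) = σ + σ * ε := by ring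
          linarith
  have hfinal : x ^ (4 - 4 * θ) ≤ K₀ * x ^ (σ + δ / 2) := by
    calc x ^ (4 - 4 * θ) ≤ 48 * C * (16 * x ^ θ * Q ^ (5 : ℕ)) ^ (1 + ε) := hchain
    _ ≤ 48 * C * (65536 * x ^ (σ + δ / 2)) := by gcongr
    _ = K₀ * x ^ (σ + δ / 2) := by rw [hK₀def]; ring
  have h4θ : 4 - 4 * θ = (σ + δ / 2) + δ / 2 := by
    rw [hσdef, hθdef, hδdef]
    field_simp
    ring
  have hxδ : x ^ (δ / 2) ≤ K₀ := by
    have hsplit : x ^ (4 - 4 * θ) = x ^ (σ + δ / 2) * x ^ (δ / 2) := by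
      rw [← Real.rpow_add hx0, ← h4θ]
    have hpos : (0 : ℝ) < x ^ (σ + δ / 2) := Real.rpow_pos_of_pos hx0 _
    have h1 : x ^ (σ + δ / 2) * x ^ (δ / 2) ≤ x ^ (σ + δ / 2) * K₀ := by
      rw [← hsplit]; linarith [hfinal]
    exact le_of_mul_le_mul_left h1 hpos
  -- contradiction
  have hXx : (K₀ + 1) ^ (2 / δ) < x := lt_of_le_of_lt (le_max_right 1 _) hx
  have h1 : (K₀ + 1) = ((K₀ + 1) ^ (2 / δ)) ^ (δ / 2) := by
    rw [← Real.rpow_mul (by positivity), show 2 / δ * (δ / 2) = 1 by field_simp, Real.rpow_one]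
  have h2 : ((K₀ + 1) ^ (2 / δ)) ^ (δ / 2) < x ^ (δ / 2) :=
    Real.rpow_lt_rpow (by positivity) hXx (by positivity)
  rw [← h1] at h2
  linarith
end

section
/- There exists an absolute constant $C > 0$ such that for every prime $p \ge 2$, setting $\epsilon_p := \min\{2/3, \, 2/\log p\}$, the sum over all $p$-smooth positive integers $a$ satisfies $\sum_{a \ge 1, \; p^{+}(a) \le p} \frac{1}{a^{1 - \epsilon_p}} \le C \log(p+1)$. -/
open Finset

lemma telescope_Ico (g : ℕ → ℝ) {a b : ℕ} (hab : a ≤ b) :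
    ∑ n ∈ Ico a b, (g (n+1) - g n) = g b - g a := by
  induction b, hab using Nat.le_induction with
  | base => simp
  | succ b hab ih => rw [Finset.sum_Ico_succ_top hab, ih]; ring

lemma sum_inv_sq_le (m : ℕ) : ∑ n ∈ Ico 2 m, (1:ℝ)/(n:ℝ)^2 ≤ 1 := by
  rcases le_or_gt 2 m with h | h
  · set g : ℕ → ℝ := fun n => -(1/((n:ℝ)-1)) with hg
    have key : ∀ n ∈ Ico 2 m, (1:ℝ)/(n:ℝ)^2 ≤ g (n+1) - g n := by
      intro n hn
      simp only [mem_Ico] at hn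
      have h2 : (2:ℝ) ≤ n := by exact_mod_cast hn.1
      have hn1 : (0:ℝ) < (n:ℝ) - 1 := by linarith
      simp only [hg, Nat.cast_add, Nat.cast_one, add_sub_cancel_right]
      have e : -(1/(n:ℝ)) - -(1/((n:ℝ)-1)) = 1/((n:ℝ)*((n:ℝ)-1)) := by
        field_simp
        ring
      rw [e, div_le_div_iff₀ (by positivity) (by positivity)]
      nlinarith
    calc ∑ n ∈ Ico 2 m, (1:ℝ)/(n:ℝ)^2 ≤ ∑ n ∈ Ico 2 m, (g (n+1) - g n) :=
          Finset.sum_le_sum key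
      _ = g m - g 2 := telescope_Ico _ h
      _ ≤ 1 := by
          have h2 : (2:ℝ) ≤ m := by exact_mod_cast h
          have h3 : (0:ℝ) < (m:ℝ)-1 := by linarith
          have : (0:ℝ) ≤ 1/((m:ℝ)-1) := by positivity
          simp only [hg]
          norm_num
          linarith
  · rw [Finset.Ico_eq_empty (by omega)]; norm_num

lemma theta_le (p : ℕ) : ∑ q ∈ (p+1).primesBelow, Real.log q ≤ p * Real.log 4 := by
  have h1 : (primorial p : ℝ) ≤ (4:ℝ)^p := by exact_mod_cast primorial_le_4_pow p
  have h2 : Real.log (primorial p) ≤ p * Real.log 4 := by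
    calc Real.log (primorial p) ≤ Real.log ((4:ℝ)^p) :=
          Real.log_le_log (by exact_mod_cast primorial_pos p) h1
      _ = p * Real.log 4 := by rw [Real.log_pow]
  have h3 : Real.log (primorial p) = ∑ q ∈ (p+1).primesBelow, Real.log q := by
    rw [primorial, Nat.primesBelow]
    push_cast
    rw [Real.log_prod]
    intro q hq
    have := (Finset.mem_filter.mp hq).2
    exact_mod_cast this.pos.ne'
  linarith [h2, h3.symm.le]

lemma pow_div_dvd_factorial {p q : ℕ} (hq : q.Prime) (hqp : q ≤ p) :
    q^(p/q) ∣ Nat.factorial p := by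
  rw [Nat.Prime.pow_dvd_factorial_iff hq (Nat.lt_succ_self _)]
  have h1 : 1 ∈ Ico 1 (Nat.log q p + 1) := by
    simp only [mem_Ico]
    exact ⟨le_refl _, by have := Nat.log_pos hq.one_lt hqp; omega⟩
  calc p / q = p / q ^ 1 := by rw [pow_one]
    _ ≤ ∑ i ∈ Ico 1 (Nat.log q p + 1), p / q ^ i :=
      Finset.single_le_sum (f := fun i => p / q ^ i) (fun i _ => Nat.zero_le _) h1

lemma prod_pow_div_dvd_factorial (p : ℕ) :
    (∏ q ∈ (p+1).primesBelow, q^(p/q)) ∣ Nat.factorial p := by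
  apply Finset.prod_dvd_of_isRelPrime
  · intro a ha b hb hab
    simp only [Function.onFun]
    rw [← Nat.coprime_iff_isRelPrime]
    exact Nat.coprime_pow_primes _ _ (Nat.prime_of_mem_primesBelow ha)
      (Nat.prime_of_mem_primesBelow hb) hab
  · intro q hq
    exact pow_div_dvd_factorial (Nat.prime_of_mem_primesBelow hq)
      (Nat.lt_succ_iff.mp (Nat.lt_of_mem_primesBelow hq))

lemma mertens1 {p : ℕ} (hp : 2 ≤ p) :
    ∑ q ∈ (p+1).primesBelow, Real.log q / q ≤ Real.log p + Real.log 4 := by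
  have hppos : (0:ℝ) < p := by positivity
  have hN : (∏ q ∈ (p+1).primesBelow, q^(p/q)) ≤ Nat.factorial p :=
    Nat.le_of_dvd (Nat.factorial_pos p) (prod_pow_div_dvd_factorial p)
  have hlogN : ∑ q ∈ (p+1).primesBelow, ((p/q : ℕ) : ℝ) * Real.log q ≤ p * Real.log p := by
    have hprodpos : 0 < ∏ q ∈ (p+1).primesBelow, q^(p/q) :=
      Finset.prod_pos fun q hq => pow_pos (Nat.prime_of_mem_primesBelow hq).pos _
    have h1 : Real.log ((∏ q ∈ (p+1).primesBelow, q^(p/q) : ℕ) : ℝ)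
        ≤ Real.log ((Nat.factorial p : ℕ) : ℝ) :=
      Real.log_le_log (by exact_mod_cast hprodpos) (by exact_mod_cast hN)
    have h2 : Real.log ((Nat.factorial p : ℕ) : ℝ) ≤ p * Real.log p := by
      calc Real.log ((Nat.factorial p : ℕ) : ℝ) ≤ Real.log ((p:ℝ)^p) := by
            apply Real.log_le_log (by exact_mod_cast Nat.factorial_pos p)
            exact_mod_cast Nat.factorial_le_pow p
        _ = p * Real.log p := by rw [Real.log_pow]
    have h3 : Real.log ((∏ q ∈ (p+1).primesBelow, q^(p/q) : ℕ) : ℝ)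
        = ∑ q ∈ (p+1).primesBelow, ((p/q : ℕ) : ℝ) * Real.log q := by
      push_cast
      rw [Real.log_prod]
      · exact Finset.sum_congr rfl fun q hq => by rw [Real.log_pow]
      · intro q hq
        exact pow_ne_zero _ (by exact_mod_cast (Nat.prime_of_mem_primesBelow hq).pos.ne')
    rw [← h3]
    exact le_trans h1 h2
  have key : ∀ q ∈ (p+1).primesBelow,
      (p:ℝ) * (Real.log q / q) - Real.log q ≤ ((p/q : ℕ) : ℝ) * Real.log q := by
    intro q hq
    have hqp := Nat.prime_of_mem_primesBelow hq
    have hq0 : (0:ℝ) < q := by exact_mod_cast hqp.pos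
    have hlq : 0 ≤ Real.log q := Real.log_nonneg (by exact_mod_cast hqp.one_lt.le)
    have hdiv : (p:ℝ)/q - 1 ≤ ((p/q : ℕ) : ℝ) := by
      have h' : (p:ℝ) < ((p/q : ℕ) : ℝ) * q + q := by
        have h1 : p < (p/q) * q + q := by
          have h2 := Nat.div_add_mod p q
          have h3 := Nat.mod_lt p hqp.pos
          have h4 : q * (p/q) = p/q * q := Nat.mul_comm _ _
          omega
        exact_mod_cast h1
      rw [sub_le_iff_le_add, div_le_iff₀ hq0]
      linarith
    calc (p:ℝ) * (Real.log q / q) - Real.log q = ((p:ℝ)/q - 1) * Real.log q := by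
          field_simp
      _ ≤ ((p/q : ℕ) : ℝ) * Real.log q := mul_le_mul_of_nonneg_right hdiv hlq
  have hsum : (p:ℝ) * (∑ q ∈ (p+1).primesBelow, Real.log q / q)
      - ∑ q ∈ (p+1).primesBelow, Real.log q ≤ p * Real.log p := by
    rw [Finset.mul_sum, ← Finset.sum_sub_distrib]
    exact le_trans (Finset.sum_le_sum key) hlogN
  have htheta := theta_le p
  have final : (p:ℝ) * (∑ q ∈ (p+1).primesBelow, Real.log q / q)
      ≤ p * (Real.log p + Real.log 4) := by ring_nf; ring_nf at hsum htheta; linarith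
  exact le_of_mul_le_mul_left (by linarith [final]) hppos


lemma abel_identity {p : ℕ} (hp : 2 ≤ p) :
    ∑ q ∈ (p+1).primesBelow, (1:ℝ)/q =
      (∑ q ∈ (p+1).primesBelow, Real.log q / q) / Real.log p
      + ∑ n ∈ Ico 2 p, (∑ q ∈ (n+1).primesBelow, Real.log q / q)
          * (1/Real.log n - 1/Real.log (n+1)) := by
  induction p, hp using Nat.le_induction with
  | base =>
      have h3 : (3:ℕ).primesBelow = {2} := by decide
      rw [h3]
      have h2 : Real.log 2 ≠ 0 := ne_of_gt (Real.log_pos (by norm_num))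
      simp only [Finset.sum_singleton, Finset.Ico_self, Finset.sum_empty]
      push_cast
      field_simp
      norm_num
  | succ p hp ih =>
      have hL1 : Real.log p ≠ 0 := ne_of_gt (Real.log_pos (by exact_mod_cast hp))
      have hL2 : Real.log (p+1:ℕ) ≠ 0 := ne_of_gt (Real.log_pos (by
        have : (2:ℝ) ≤ (p:ℝ) := by exact_mod_cast hp
        push_cast; linarith))
      have hsplit : ∑ n ∈ Ico 2 (p+1), (∑ q ∈ (n+1).primesBelow, Real.log q / q)
            * (1/Real.log n - 1/Real.log (n+1))
          = (∑ n ∈ Ico 2 p, (∑ q ∈ (n+1).primesBelow, Real.log q / q)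
            * (1/Real.log n - 1/Real.log (n+1)))
            + (∑ q ∈ (p+1).primesBelow, Real.log q / q)
              * (1/Real.log p - 1/Real.log (p+1:ℕ)) := by
        rw [Finset.sum_Ico_succ_top hp]; push_cast; ring_nf
      rw [hsplit]
      rcases em ((p+1).Prime) with hpr | hpr
      · rw [Nat.primesBelow_succ, if_pos hpr]
        have hnotmem : (p+1) ∉ (p+1).primesBelow := fun h =>
          lt_irrefl _ (Nat.lt_of_mem_primesBelow h)
        rw [Finset.sum_insert hnotmem, Finset.sum_insert hnotmem, ih]
        push_cast at hL2 ⊢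
        field_simp
        ring
      · rw [Nat.primesBelow_succ, if_neg hpr, ih]
        push_cast at hL2 ⊢
        field_simp
        ring

lemma aux_inv_le_exp {x : ℝ} (hx' : x ≤ 4/5) (hx : 0 ≤ x) :
    (1 - x)⁻¹ ≤ Real.exp (x + 5*x^2) := by
  have h1 : (0:ℝ) < 1 - x := by linarith
  have h2 : (1 - x)⁻¹ > 0 := by positivity
  have h3 : (1 - x) * (1 - x)⁻¹ = 1 := mul_inv_cancel₀ (by linarith)
  have hlog : Real.log ((1 - x)⁻¹) ≤ (1 - x)⁻¹ - 1 := Real.log_le_sub_one_of_pos h2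
  have key : (1 - x)⁻¹ - 1 ≤ x + 5*x^2 := by nlinarith [sq_nonneg x, h2.le]
  calc (1 - x)⁻¹ = Real.exp (Real.log ((1-x)⁻¹)) := (Real.exp_log h2).symm
    _ ≤ Real.exp (x + 5*x^2) := Real.exp_le_exp.mpr (le_trans hlog key)

lemma log_four_le_two : Real.log 4 ≤ 2 := by
  have h4 : (4:ℝ) = 2^2 := by norm_num
  rw [h4, Real.log_pow]
  have := Real.log_two_lt_d9
  push_cast
  linarith

lemma mertens2 {p : ℕ} (hp : 2 ≤ p) :
    ∑ q ∈ (p+1).primesBelow, (1:ℝ)/q ≤ Real.log (Real.log (p+1)) + 7 := by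
  have hp2 : (2:ℝ) ≤ (p:ℝ) := by exact_mod_cast hp
  have hlogp : 0 < Real.log p := Real.log_pos (by linarith)
  have hlog2 : (0.6931471803:ℝ) < Real.log 2 := Real.log_two_gt_d9
  have hlog2p : Real.log 2 ≤ Real.log p := Real.log_le_log (by norm_num) hp2
  rw [abel_identity hp]
  -- first term
  have h1 : (∑ q ∈ (p+1).primesBelow, Real.log q / q) / Real.log p ≤ 3 := by
    rw [div_le_iff₀ hlogp]
    have hm := mertens1 hp
    have hlog4 : Real.log 4 = 2 * Real.log 2 := by
      rw [show (4:ℝ) = 2^2 by norm_num, Real.log_pow]; push_cast; ring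
    linarith
  -- middle sum
  set g1 : ℕ → ℝ := fun m => Real.log (Real.log m) with hg1
  set g2 : ℕ → ℝ := fun m => -(1/Real.log m) with hg2
  have key : ∀ n ∈ Ico 2 p, (∑ q ∈ (n+1).primesBelow, Real.log q / q)
      * (1/Real.log n - 1/Real.log (n+1)) ≤
      (g1 (n+1) - g1 n) + 2 * (g2 (n+1) - g2 n) := by
    intro n hn
    simp only [mem_Ico] at hn
    have hn2 : (2:ℝ) ≤ (n:ℝ) := by exact_mod_cast hn.1
    have hL1 : 0 < Real.log n := Real.log_pos (by linarith)
    have hL2 : 0 < Real.log ((n:ℕ)+1:ℕ) := Real.log_pos (by push_cast; linarith)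
    have hL12 : Real.log n < Real.log ((n:ℕ)+1:ℕ) := by
      apply Real.log_lt_log (by linarith)
      push_cast; linarith
    have hdelta : 0 ≤ 1/Real.log n - 1/Real.log ((n:ℕ)+1:ℕ) := by
      rw [sub_nonneg, div_le_div_iff₀ hL2 hL1]
      nlinarith
    have hM := mertens1 hn.1
    have step1 : (∑ q ∈ (n+1).primesBelow, Real.log q / q)
        * (1/Real.log n - 1/Real.log ((n:ℕ)+1:ℕ))
        ≤ (Real.log n + Real.log 4) * (1/Real.log n - 1/Real.log ((n:ℕ)+1:ℕ)) :=
      mul_le_mul_of_nonneg_right hM hdelta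
    have step2 : Real.log n * (1/Real.log n - 1/Real.log ((n:ℕ)+1:ℕ))
        ≤ Real.log (Real.log ((n:ℕ)+1:ℕ)) - Real.log (Real.log n) := by
      have e1 : Real.log n * (1/Real.log n - 1/Real.log ((n:ℕ)+1:ℕ))
          = 1 - Real.log n / Real.log ((n:ℕ)+1:ℕ) := by field_simp
      have e2 : Real.log (Real.log n / Real.log ((n:ℕ)+1:ℕ))
          ≤ Real.log n / Real.log ((n:ℕ)+1:ℕ) - 1 :=
        Real.log_le_sub_one_of_pos (by positivity)
      rw [Real.log_div hL1.ne' hL2.ne'] at e2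
      linarith
    have step3 : Real.log 4 * (1/Real.log n - 1/Real.log ((n:ℕ)+1:ℕ))
        ≤ 2 * (1/Real.log n - 1/Real.log ((n:ℕ)+1:ℕ)) :=
      mul_le_mul_of_nonneg_right log_four_le_two hdelta
    simp only [hg1, hg2]
    push_cast
    push_cast at step1 step2 step3
    nlinarith [step1, step2, step3]
  have hmiddle : ∑ n ∈ Ico 2 p, (∑ q ∈ (n+1).primesBelow, Real.log q / q)
      * (1/Real.log n - 1/Real.log (n+1))
      ≤ (Real.log (Real.log p) - Real.log (Real.log 2))
        + 2 * ((-(1/Real.log p)) - (-(1/Real.log 2))) := by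
    calc ∑ n ∈ Ico 2 p, (∑ q ∈ (n+1).primesBelow, Real.log q / q)
          * (1/Real.log n - 1/Real.log (n+1))
        ≤ ∑ n ∈ Ico 2 p, ((g1 (n+1) - g1 n) + 2 * (g2 (n+1) - g2 n)) :=
          Finset.sum_le_sum key
      _ = (g1 p - g1 2) + 2 * (g2 p - g2 2) := by
          rw [Finset.sum_add_distrib, telescope_Ico g1 hp, ← Finset.mul_sum,
            telescope_Ico g2 hp]
      _ = (Real.log (Real.log p) - Real.log (Real.log 2))
          + 2 * ((-(1/Real.log p)) - (-(1/Real.log 2))) := by simp only [hg1, hg2]; norm_num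
  -- numeric bounds
  have hloglog2 : (-1:ℝ) ≤ Real.log (Real.log 2) := by
    have he : Real.exp (-1) ≤ Real.log 2 := by
      rw [Real.exp_neg]
      have h27 : (2.7:ℝ) < Real.exp 1 := by
        have := Real.exp_one_gt_d9
        linarith
      have : (Real.exp 1)⁻¹ ≤ (2.7:ℝ)⁻¹ := by
        apply inv_anti₀ (by norm_num) h27.le
      nlinarith
    calc (-1:ℝ) = Real.log (Real.exp (-1)) := (Real.log_exp _).symm
      _ ≤ Real.log (Real.log 2) := Real.log_le_log (Real.exp_pos _) he
  have hinvlog2 : 2 * (1/Real.log 2) ≤ 3 := by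
    rw [mul_one_div, div_le_iff₀ (by linarith)]
    linarith
  have hmono : Real.log (Real.log p) ≤ Real.log (Real.log ((p:ℝ)+1)) := by
    apply Real.log_le_log hlogp
    apply Real.log_le_log (by linarith)
    linarith
  have hinvp : 0 < 1/Real.log p := by positivity
  push_cast
  push_cast at hmiddle
  linarith [h1, hmiddle, hloglog2, hinvlog2, hmono, hinvp]

lemma aux_exp_le {t : ℝ} (h0 : 0 ≤ t) (h2 : t ≤ 2) :
    Real.exp t ≤ 1 + t * Real.exp 2 := by
  have hexp : Real.exp t ≤ Real.exp 2 := Real.exp_le_exp.mpr h2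
  have hneg : 1 - t ≤ (Real.exp t)⁻¹ := by
    have := Real.add_one_le_exp (-t)
    rw [Real.exp_neg] at this
    linarith
  have hpos := Real.exp_pos t
  have hinv : Real.exp t * (Real.exp t)⁻¹ = 1 := mul_inv_cancel₀ hpos.ne'
  nlinarith [mul_nonneg (sub_nonneg.mpr hneg) hpos.le]

lemma two_rpow_neg_third_le : (2:ℝ)^(-(1/3):ℝ) ≤ 4/5 := by
  have h1 : ((5:ℝ)/4)^(3:ℕ) ≤ 2 := by norm_num
  have h2 : (5:ℝ)/4 ≤ (2:ℝ)^((1:ℝ)/3) := by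
    have h3 : ((2:ℝ)^((1:ℝ)/3))^(3:ℕ) = 2 := by
      rw [← Real.rpow_natCast ((2:ℝ)^((1:ℝ)/3)) 3, ← Real.rpow_mul (by norm_num)]
      norm_num
    nlinarith [Real.rpow_nonneg (show (0:ℝ) ≤ 2 by norm_num) ((1:ℝ)/3),
      sq_nonneg ((2:ℝ)^((1:ℝ)/3) - 5/4), sq_nonneg ((2:ℝ)^((1:ℝ)/3) + 5/4)]
  have h4 : (2:ℝ)^(-(1/3):ℝ) = ((2:ℝ)^((1:ℝ)/3))⁻¹ := by
    rw [← Real.rpow_neg_one, ← Real.rpow_mul (by norm_num)]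
    norm_num
  rw [h4]
  rw [inv_le_comm₀ (by positivity) (by norm_num)]
  linarith

theorem stmt12 :
    ∃ C : ℝ, 0 < C ∧ ∀ p : ℕ, p.Prime →
      ∑' a : {a : ℕ // 0 < a ∧ ∀ q : ℕ, q.Prime → q ∣ a → q ≤ p},
        (1 : ℝ) / ((a : ℕ) : ℝ) ^ (1 - min (2 / 3 : ℝ) (2 / Real.log p))
      ≤ C * Real.log (p + 1) := by
  refine ⟨Real.exp 330, Real.exp_pos _, ?_⟩
  intro p hp
  have hp2 : 2 ≤ p := hp.two_le
  have hp2' : (2:ℝ) ≤ (p:ℝ) := by exact_mod_cast hp2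
  have hlogp : 0 < Real.log p := Real.log_pos (by linarith)
  set ε := min (2/3 : ℝ) (2 / Real.log p) with hεdef
  have hε23 : ε ≤ 2/3 := min_le_left _ _
  have hεlog : ε ≤ 2/Real.log p := min_le_right _ _
  have hε0 : 0 ≤ ε := le_min (by norm_num) (by positivity)
  have hε1 : ε - 1 < 0 := by linarith
  -- the multiplicative function
  set F : ℕ →* ℝ := {
    toFun := fun n => ((n:ℕ):ℝ)^(ε-1),
    map_one' := by norm_num,
    map_mul' := fun m n => by
      push_cast
      exact Real.mul_rpow (Nat.cast_nonneg m) (Nat.cast_nonneg n) } with hFdef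
  have hF : ∀ n : ℕ, F n = ((n:ℕ):ℝ)^(ε-1) := fun n => rfl
  have h1 : ∀ {q : ℕ}, q.Prime → ‖F q‖ < 1 := by
    intro q hq
    rw [hF, Real.norm_eq_abs, abs_of_nonneg (Real.rpow_nonneg (Nat.cast_nonneg q) _)]
    exact Real.rpow_lt_one_of_one_lt_of_neg (by exact_mod_cast hq.one_lt) hε1
  have hs := EulerProduct.summable_and_hasSum_smoothNumbers_prod_primesBelow_geometric
    (f := F) h1 (p+1)
  have heq : ∑' m : (p+1).smoothNumbers, F m = ∏ q ∈ (p+1).primesBelow, (1 - F q)⁻¹ :=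
    hs.2.tsum_eq
  -- set identification
  have hset : ∀ a : ℕ, (0 < a ∧ ∀ q : ℕ, q.Prime → q ∣ a → q ≤ p) ↔
      a ∈ (p+1).smoothNumbers := by
    intro a
    rw [Nat.mem_smoothNumbers']
    constructor
    · rintro ⟨_, h⟩ q hq hqa
      exact Nat.lt_succ_of_le (h q hq hqa)
    · intro h
      constructor
      · by_contra h0
        obtain ⟨Q, hQ1, hQ2⟩ := Nat.exists_infinite_primes (p+1)
        have := h Q hQ2 (by
          have : a = 0 := by omega
          simp [this])
        omega
      · exact fun q hq hqa => Nat.lt_succ_iff.mp (h q hq hqa)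
  have htsum_eq : (∑' a : {a : ℕ // 0 < a ∧ ∀ q : ℕ, q.Prime → q ∣ a → q ≤ p},
      (1 : ℝ) / ((a : ℕ) : ℝ) ^ (1 - ε)) = ∑' m : (p+1).smoothNumbers, F m := by
    rw [← Equiv.tsum_eq (Equiv.subtypeEquivRight hset) (fun m : (p+1).smoothNumbers => F m)]
    apply tsum_congr
    intro a
    have ha : (0:ℝ) < (a.val : ℝ) := by exact_mod_cast a.2.1
    show (1 : ℝ) / ((a.val : ℕ) : ℝ) ^ (1 - ε) = F a.val
    rw [hF, one_div, ← Real.rpow_neg ha.le, neg_sub]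
  rw [htsum_eq, heq]
  -- bound each factor
  have hfact : ∀ q ∈ (p+1).primesBelow, (1 - F q)⁻¹
      ≤ Real.exp (((q:ℕ):ℝ)^(ε-1) + 5*(((q:ℕ):ℝ)^(ε-1))^2) := by
    intro q hq
    have hqpr := Nat.prime_of_mem_primesBelow hq
    have hq2 : (2:ℝ) ≤ (q:ℝ) := by exact_mod_cast hqpr.two_le
    have hx0 : 0 ≤ ((q:ℕ):ℝ)^(ε-1) := Real.rpow_nonneg (by linarith) _
    have hx45 : ((q:ℕ):ℝ)^(ε-1) ≤ 4/5 := by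
      calc ((q:ℕ):ℝ)^(ε-1) ≤ ((q:ℕ):ℝ)^(-(1/3):ℝ) :=
            Real.rpow_le_rpow_of_exponent_le (by linarith) (by linarith)
        _ ≤ (2:ℝ)^(-(1/3):ℝ) :=
            Real.rpow_le_rpow_of_nonpos (by norm_num) hq2 (by norm_num)
        _ ≤ 4/5 := two_rpow_neg_third_le
    rw [hF]
    exact aux_inv_le_exp hx45 hx0
  have hnonneg : ∀ q ∈ (p+1).primesBelow, 0 ≤ (1 - F q)⁻¹ := by
    intro q hq
    have hqpr := Nat.prime_of_mem_primesBelow hq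
    have h := h1 hqpr
    rw [Real.norm_eq_abs, abs_lt] at h
    have : 0 < 1 - F q := by linarith [h.2]
    positivity
  have hprod : ∏ q ∈ (p+1).primesBelow, (1 - F q)⁻¹
      ≤ Real.exp (∑ q ∈ (p+1).primesBelow, (((q:ℕ):ℝ)^(ε-1) + 5*(((q:ℕ):ℝ)^(ε-1))^2)) := by
    rw [Real.exp_sum]
    exact Finset.prod_le_prod hnonneg hfact
  -- bound the exponent sum
  have hterm : ∀ q ∈ (p+1).primesBelow,
      ((q:ℕ):ℝ)^(ε-1) + 5*(((q:ℕ):ℝ)^(ε-1))^2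
      ≤ 1/(q:ℝ) + ε * Real.exp 2 * (Real.log q/(q:ℝ)) + 5*(Real.exp 2)^2 * (1/(q:ℝ)^2) := by
    intro q hq
    have hqpr := Nat.prime_of_mem_primesBelow hq
    have hqp : q ≤ p := Nat.lt_succ_iff.mp (Nat.lt_of_mem_primesBelow hq)
    have hq2 : (2:ℝ) ≤ (q:ℝ) := by exact_mod_cast hqpr.two_le
    have hq0 : (0:ℝ) < (q:ℝ) := by linarith
    have hlq0 : 0 ≤ Real.log q := Real.log_nonneg (by linarith)
    have hlqp : Real.log q ≤ Real.log p := Real.log_le_log hq0 (by exact_mod_cast hqp)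
    have hT : ε * Real.log q ≤ 2 := by
      calc ε * Real.log q ≤ (2/Real.log p) * Real.log q :=
            mul_le_mul_of_nonneg_right hεlog hlq0
        _ ≤ (2/Real.log p) * Real.log p :=
            mul_le_mul_of_nonneg_left hlqp (by positivity)
        _ = 2 := by field_simp
    have hT0 : 0 ≤ ε * Real.log q := mul_nonneg hε0 hlq0
    have hxsplit : ((q:ℕ):ℝ)^(ε-1) = ((q:ℕ):ℝ)^ε * (1/(q:ℝ)) := by
      rw [show ε - 1 = ε + (-1) by ring, Real.rpow_add hq0, Real.rpow_neg_one, one_div]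
    have hqε : ((q:ℕ):ℝ)^ε = Real.exp (ε * Real.log q) := by
      rw [Real.rpow_def_of_pos hq0, mul_comm]
    have hqεe : ((q:ℕ):ℝ)^ε ≤ Real.exp 2 := by
      rw [hqε]; exact Real.exp_le_exp.mpr hT
    have hxe : ((q:ℕ):ℝ)^(ε-1) ≤ Real.exp 2 * (1/(q:ℝ)) := by
      rw [hxsplit]
      exact mul_le_mul_of_nonneg_right hqεe (by positivity)
    have hx0 : 0 ≤ ((q:ℕ):ℝ)^(ε-1) := Real.rpow_nonneg hq0.le _
    have hx1 : ((q:ℕ):ℝ)^(ε-1) ≤ 1/(q:ℝ) + ε * Real.exp 2 * (Real.log q/(q:ℝ)) := by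
      have := aux_exp_le hT0 hT
      calc ((q:ℕ):ℝ)^(ε-1) = Real.exp (ε * Real.log q) * (1/(q:ℝ)) := by
            rw [hxsplit, hqε]
        _ ≤ (1 + (ε * Real.log q) * Real.exp 2) * (1/(q:ℝ)) :=
            mul_le_mul_of_nonneg_right this (by positivity)
        _ = 1/(q:ℝ) + ε * Real.exp 2 * (Real.log q/(q:ℝ)) := by ring
    have hx2 : (((q:ℕ):ℝ)^(ε-1))^2 ≤ (Real.exp 2)^2 * (1/(q:ℝ)^2) := by
      calc (((q:ℕ):ℝ)^(ε-1))^2 ≤ (Real.exp 2 * (1/(q:ℝ)))^2 := by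
            apply pow_le_pow_left₀ hx0 hxe
        _ = (Real.exp 2)^2 * (1/(q:ℝ)^2) := by ring
    linarith
  have hS := mertens2 hp2
  have hM := mertens1 hp2
  have hM0 : 0 ≤ ∑ q ∈ (p+1).primesBelow, Real.log q / q := by
    apply Finset.sum_nonneg
    intro q hq
    have hqpr := Nat.prime_of_mem_primesBelow hq
    exact div_nonneg (Real.log_nonneg (by exact_mod_cast hqpr.one_lt.le)) (by positivity)
  have hsq : ∑ q ∈ (p+1).primesBelow, 1/((q:ℕ):ℝ)^2 ≤ 1 := by
    refine le_trans (Finset.sum_le_sum_of_subset_of_nonneg ?_ ?_) (sum_inv_sq_le (p+1))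
    · intro q hq
      simp only [mem_Ico]
      exact ⟨(Nat.prime_of_mem_primesBelow hq).two_le, Nat.lt_of_mem_primesBelow hq⟩
    · intro n _ _
      positivity
  -- aggregate
  have hεM : ε * (∑ q ∈ (p+1).primesBelow, Real.log q / q) ≤ 6 := by
    have hlog4 : Real.log 4 = 2 * Real.log 2 := by
      rw [show (4:ℝ) = 2^2 by norm_num, Real.log_pow]; push_cast; ring
    have hlog2p : Real.log 2 ≤ Real.log p := Real.log_le_log (by norm_num) hp2'
    have hlog20 : 0 < Real.log 2 := Real.log_pos (by norm_num)
    calc ε * (∑ q ∈ (p+1).primesBelow, Real.log q / q)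
        ≤ (2/Real.log p) * (∑ q ∈ (p+1).primesBelow, Real.log q / q) :=
          mul_le_mul_of_nonneg_right hεlog hM0
      _ ≤ (2/Real.log p) * (Real.log p + 2 * Real.log 2) := by
          apply mul_le_mul_of_nonneg_left _ (by positivity)
          rw [← hlog4]; exact hM
      _ = 2 + 4 * (Real.log 2 / Real.log p) := by field_simp; ring
      _ ≤ 6 := by
          have : Real.log 2 / Real.log p ≤ 1 := by
            rw [div_le_one hlogp]; exact hlog2p
          linarith
  have hsum_le : ∑ q ∈ (p+1).primesBelow, (((q:ℕ):ℝ)^(ε-1) + 5*(((q:ℕ):ℝ)^(ε-1))^2)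
      ≤ Real.log (Real.log ((p:ℝ)+1)) + 330 := by
    have he2 : Real.exp 2 ≤ 7.4 := by
      have h27 : Real.exp 1 < 2.7182818286 := Real.exp_one_lt_d9
      have h0 : Real.exp 2 = Real.exp 1 * Real.exp 1 := by
        rw [← Real.exp_add]; norm_num
      nlinarith [Real.exp_pos 1]
    have he20 : 0 < Real.exp 2 := Real.exp_pos 2
    calc ∑ q ∈ (p+1).primesBelow, (((q:ℕ):ℝ)^(ε-1) + 5*(((q:ℕ):ℝ)^(ε-1))^2)
        ≤ ∑ q ∈ (p+1).primesBelow,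
            (1/(q:ℝ) + ε * Real.exp 2 * (Real.log q/(q:ℝ)) + 5*(Real.exp 2)^2 * (1/(q:ℝ)^2)) :=
          Finset.sum_le_sum hterm
      _ = (∑ q ∈ (p+1).primesBelow, 1/(q:ℝ))
          + ε * Real.exp 2 * (∑ q ∈ (p+1).primesBelow, Real.log q/(q:ℝ))
          + 5*(Real.exp 2)^2 * (∑ q ∈ (p+1).primesBelow, 1/(q:ℝ)^2) := by
          rw [Finset.sum_add_distrib, Finset.sum_add_distrib, ← Finset.mul_sum, ← Finset.mul_sum]
      _ ≤ Real.log (Real.log ((p:ℝ)+1)) + 330 := by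
          have e1 : ε * Real.exp 2 * (∑ q ∈ (p+1).primesBelow, Real.log q/(q:ℝ))
              ≤ 6 * Real.exp 2 := by
            calc ε * Real.exp 2 * (∑ q ∈ (p+1).primesBelow, Real.log q/(q:ℝ))
                = Real.exp 2 * (ε * (∑ q ∈ (p+1).primesBelow, Real.log q/(q:ℝ))) := by ring
              _ ≤ Real.exp 2 * 6 := mul_le_mul_of_nonneg_left hεM he20.le
              _ = 6 * Real.exp 2 := by ring
          have e2 : 5*(Real.exp 2)^2 * (∑ q ∈ (p+1).primesBelow, 1/(q:ℝ)^2)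
              ≤ 5*(Real.exp 2)^2 := by
            nlinarith [Finset.sum_nonneg (fun q (_ : q ∈ (p+1).primesBelow) =>
              by positivity : ∀ q ∈ (p+1).primesBelow, (0:ℝ) ≤ 1/(q:ℝ)^2)]
          have hScast : (∑ q ∈ (p+1).primesBelow, 1/(q:ℝ))
              ≤ Real.log (Real.log ((p:ℝ)+1)) + 7 := by
            push_cast at hS ⊢
            exact hS
          nlinarith [he2, he20]
  calc ∏ q ∈ (p+1).primesBelow, (1 - F q)⁻¹
      ≤ Real.exp (∑ q ∈ (p+1).primesBelow, (((q:ℕ):ℝ)^(ε-1) + 5*(((q:ℕ):ℝ)^(ε-1))^2)) := hprod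
    _ ≤ Real.exp (Real.log (Real.log ((p:ℝ)+1)) + 330) := Real.exp_le_exp.mpr hsum_le
    _ = Real.exp 330 * Real.log ((p:ℝ)+1) := by
        rw [Real.exp_add, Real.exp_log (Real.log_pos (by linarith))]
        ring
end
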